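/- Let S be a digital simple closed curve and f: S → Y ⊆ (ℤ, c₁) a shy map. Then Y is a singleton {z} or a doubleton {z, z+1} for some integer z. -/

import Mathlib

/-- A subset `A` is connected under adjacency `κ` if any two of its points are
joined by a path within `A` whose consecutive points are `κ`-adjacent. -/
def DConn {X : Type*} (κ : X → X → Prop) (A : Set X) : Prop :=
  ∀ a ∈ A, ∀ b ∈ A,
    Relation.ReflTransGen (fun u v => κ u v ∧ u ∈ A ∧ v ∈ A) a b

/-- `f` is digitally continuous if images of connected sets are connected. -/
def DCont {X Y : Type*} (κ : X → X → Prop) (lam : Y → Y → Prop) (f : X → Y) : Prop :=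
  ∀ A : Set X, DConn κ A → DConn lam (f '' A)

/-- `f` is shy: a continuous surjection with connected point preimages and
connected preimages of adjacent pairs. -/
def DShy {X Y : Type*} (κ : X → X → Prop) (lam : Y → Y → Prop) (f : X → Y) : Prop :=
  DCont κ lam f ∧ Function.Surjective f ∧
    (∀ y : Y, DConn κ (f ⁻¹' {y})) ∧
    ∀ y₀ y₁ : Y, lam y₀ y₁ → DConn κ (f ⁻¹' {y₀, y₁})

/-- The `c₁`-adjacency on ℤ. -/
def c1 : ℤ → ℤ → Prop := fun a b => |a - b| = 1

/-- Walking forward `n` steps inside a set gives a path. -/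
lemma pathAll {m : ℕ} (A : Set (ZMod m)) (a : ZMod m) :
    ∀ n : ℕ, (∀ t, t ≤ n → a + (t : ZMod m) ∈ A) →
    Relation.ReflTransGen
      (fun u v : ZMod m => (v = u + 1 ∨ u = v + 1) ∧ u ∈ A ∧ v ∈ A) a (a + (n : ZMod m)) := by
  intro n
  induction n with
  | zero => intro _; simpa using Relation.ReflTransGen.refl
  | succ n ih =>
    intro h
    refine (ih (fun t ht => h t (ht.trans (Nat.le_succ n)))).tail ?_
    exact ⟨Or.inl (by push_cast; ring), h n (Nat.le_succ n), h (n+1) le_rfl⟩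

/-- The complement of a connected subset of the digital cycle is connected. -/
lemma compl_conn {m : ℕ} [NeZero m] (hm : 4 ≤ m) (A : Set (ZMod m))
    (hA : DConn (fun i j : ZMod m => j = i + 1 ∨ i = j + 1) A) :
    DConn (fun i j : ZMod m => j = i + 1 ∨ i = j + 1) Aᶜ := by
  classical
  haveI : Fact (1 < m) := ⟨by omega⟩
  intro a ha b hb
  set k := (b - a).val with hk
  have hbak : b = a + (k : ZMod m) := by rw [hk, ZMod.natCast_zmod_val]; ring
  have hkm : k < m := ZMod.val_lt _
  by_cases h1 : ∃ t : ℕ, 0 < t ∧ t < k ∧ a + (t : ZMod m) ∈ A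
  · by_cases h2 : ∃ t : ℕ, k < t ∧ t < m ∧ a + (t : ZMod m) ∈ A
    · exfalso
      obtain ⟨t0, ht0pos, ht0k, ht0A⟩ := h1
      obtain ⟨j, hjk, hjm, hjA⟩ := h2
      set P : ℕ → Prop := fun t => a + (t : ZMod m) ∈ A with hP
      set i := Nat.findGreatest P (k-1) with hi
      have hiP : P i := Nat.findGreatest_spec (by omega : t0 ≤ k - 1) ht0A
      have hipos : 0 < i := by
        rcases Nat.eq_zero_or_pos i with h0 | h
        · exfalso
          rw [h0] at hiP
          apply ha
          simpa [hP] using hiP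
        · exact h
      have hile : i ≤ k - 1 := Nat.findGreatest_le _
      have hik : i < k := by omega
      have himax : ∀ t, i < t → t < k → ¬ P t := fun t h1t h2t =>
        Nat.findGreatest_is_greatest h1t (by omega)
      have hpath : Relation.ReflTransGen
          (fun u v : ZMod m => (v = u + 1 ∨ u = v + 1) ∧ u ∈ A ∧ v ∈ A)
          (a + (i : ZMod m)) (a + (j : ZMod m)) := hA _ hiP _ hjA
      have key : ∀ x : ZMod m, Relation.ReflTransGen
          (fun u v : ZMod m => ((fun i j : ZMod m => j = i + 1 ∨ i = j + 1) u v) ∧ u ∈ A ∧ v ∈ A)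
          (a + (i : ZMod m)) x → 0 < (x - a).val ∧ (x - a).val ≤ i := by
        intro x hx
        induction hx with
        | refl =>
          have : (a + (i : ZMod m)) - a = (i : ZMod m) := by ring
          rw [this, ZMod.val_cast_of_lt (by omega : i < m)]
          exact ⟨hipos, le_rfl⟩
        | @tail p q hp step ih =>
          obtain ⟨hadj, hpA, hqA⟩ := step
          obtain ⟨ihpos, ihle⟩ := ih
          set d := (p - a).val with hd
          rcases (show q = p + 1 ∨ p = q + 1 from hadj) with h' | h'
          · -- q = p + 1
            have hqa : q - a = (p - a) + 1 := by rw [h']; ring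
            have hval : (q - a).val = d + 1 := by
              rw [hqa, ZMod.val_add, ZMod.val_one, ← hd, Nat.mod_eq_of_lt (by omega)]
            rw [hval]
            refine ⟨by omega, ?_⟩
            by_contra hgt
            have hdi : d = i := by omega
            have hqeq : q = a + ((i+1 : ℕ) : ZMod m) := by
              have : q - a = (((q - a).val : ℕ) : ZMod m) := (ZMod.natCast_zmod_val _).symm
              rw [hval, hdi] at this
              have h2 : q = a + (q - a) := by ring
              rw [h2, this]
            rcases lt_or_eq_of_le (Nat.succ_le_of_lt hik) with hlt | heq
            · exact himax (i+1) (by omega) hlt (by show a + ((i+1 : ℕ) : ZMod m) ∈ A; rw [← hqeq]; exact hqA)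
            · apply hb
              rw [hbak, ← heq, ← hqeq]
              exact hqA
          · -- p = q + 1
            have hpa : p - a = (q - a) + 1 := by rw [h']; ring
            set e := (q - a).val with he
            have hdm : d = (e + 1) % m := by
              rw [hd, hpa, ZMod.val_add, ZMod.val_one, ← he]
            have hem : e < m := ZMod.val_lt _
            have hval : e = d - 1 ∧ 0 < d := by
              constructor
              · rcases Nat.lt_or_ge (e+1) m with h | h
                · rw [Nat.mod_eq_of_lt h] at hdm; omega
                · have : e + 1 = m := by omega
                  rw [this, Nat.mod_self] at hdm; omega
              · exact ihpos
            have hepos : 0 < e := by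
              rcases Nat.eq_zero_or_pos e with h0 | h
              · exfalso
                have hqa0 : q - a = 0 := by
                  rw [← ZMod.val_eq_zero]; omega
                have hqa : q = a := by
                  have h2 : q = a + (q - a) := by ring
                  rw [h2, hqa0, add_zero]
                exact ha (hqa ▸ hqA)
              · exact h
            exact ⟨hepos, by omega⟩
      obtain ⟨_, hle⟩ := key _ hpath
      have hvj : ((a + (j : ZMod m)) - a).val = j := by
        have h : (a + (j : ZMod m)) - a = (j : ZMod m) := by ring
        rw [h, ZMod.val_cast_of_lt hjm]
      omega
    · -- walk backwards (from b forwards to a)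
      push_neg at h2
      have hsum : b + ((m - k : ℕ) : ZMod m) = a := by
        have h1 : ((m - k : ℕ) : ZMod m) = - (k : ℕ) := by
          rw [Nat.cast_sub hkm.le, ZMod.natCast_self]; ring
        rw [hbak, h1]; ring
      have hmem : ∀ s, s ≤ m - k → b + (s : ZMod m) ∈ Aᶜ := by
        intro s hs
        rcases Nat.eq_zero_or_pos s with h0 | hspos
        · simpa [h0] using hb
        · rcases lt_or_eq_of_le hs with hlt | heq
          · have hrw : b + (s : ZMod m) = a + ((k + s : ℕ) : ZMod m) := by
              rw [hbak]; push_cast; ring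
            rw [hrw]
            exact h2 (k+s) (by omega) (by omega)
          · rw [heq, hsum]; exact ha
      have hpath := pathAll Aᶜ b (m - k) hmem
      rw [hsum] at hpath
      show Relation.ReflTransGen
        (fun u v : ZMod m => (v = u + 1 ∨ u = v + 1) ∧ u ∈ Aᶜ ∧ v ∈ Aᶜ) a b
      have hsymm : Symmetric (fun u v : ZMod m => (v = u + 1 ∨ u = v + 1) ∧ u ∈ Aᶜ ∧ v ∈ Aᶜ) :=
        fun u v ⟨h, hu, hv⟩ => ⟨h.symm, hv, hu⟩
      haveI : Std.Symm (fun u v : ZMod m => (v = u + 1 ∨ u = v + 1) ∧ u ∈ Aᶜ ∧ v ∈ Aᶜ) := ⟨fun _ _ h => hsymm h⟩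
      exact (Relation.ReflTransGen.symmetric).symm _ _ hpath
  · -- walk forwards from a to b
    push_neg at h1
    have hmem : ∀ t, t ≤ k → a + (t : ZMod m) ∈ Aᶜ := by
      intro t ht
      rcases Nat.eq_zero_or_pos t with h0 | htpos
      · simpa [h0] using ha
      · rcases lt_or_eq_of_le ht with hlt | heq
        · exact h1 t htpos hlt
        · rw [heq, ← hbak]; exact hb
    have hpath := pathAll Aᶜ a k hmem
    rw [← hbak] at hpath
    show Relation.ReflTransGen
      (fun u v : ZMod m => (v = u + 1 ∨ u = v + 1) ∧ u ∈ Aᶜ ∧ v ∈ Aᶜ) a b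
    exact hpath

/-- Discrete intermediate value property for `c1`-paths within a set. -/
lemma interval_lemma (Y : Set ℤ) (T : Set Y) (a b : Y)
    (hab : Relation.ReflTransGen (fun u v : Y => c1 u.1 v.1 ∧ u ∈ T ∧ v ∈ T) a b)
    (haT : a ∈ T) :
    ∀ w : ℤ, a.1 ≤ w → w ≤ b.1 → ∃ t : Y, t ∈ T ∧ t.1 = w := by
  induction hab with
  | refl => intro w h1 h2; exact ⟨a, haT, le_antisymm h1 h2⟩
  | @tail p q hp step ih =>
    intro w h1 h2
    obtain ⟨hc, hpT, hqT⟩ := step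
    have hadj : p.1 - q.1 = 1 ∨ p.1 - q.1 = -1 := by
      have := (abs_eq (by norm_num : (0:ℤ) ≤ 1)).mp hc
      tauto
    rcases le_or_gt w p.1 with h | h
    · exact ih w h1 h
    · exact ⟨q, hqT, by omega⟩

theorem shy_from_simple_closed_curve (m : ℕ) (hm : 4 ≤ m) (Y : Set ℤ)
    (f : ZMod m → Y)
    (hshy : DShy (fun i j : ZMod m => j = i + 1 ∨ i = j + 1)
      (fun a b : Y => c1 a.1 b.1) f) :
    (∃ z : ℤ, Y = {z}) ∨ (∃ z : ℤ, Y = {z, z + 1}) := by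
  classical
  haveI : NeZero m := ⟨by omega⟩
  obtain ⟨hcont, hsurj, hpt, hpair⟩ := hshy
  by_contra hcon
  push_neg at hcon
  obtain ⟨hns, hnd⟩ := hcon
  -- the whole cycle is connected
  have hA0 : DConn (fun i j : ZMod m => j = i + 1 ∨ i = j + 1) (Set.univ : Set (ZMod m)) := by
    have h := compl_conn hm (∅ : Set (ZMod m)) (fun a ha => absurd ha (Set.notMem_empty a))
    simpa using h
  have hYconn := hcont Set.univ hA0
  have hmemY : ∀ y : Y, y ∈ f '' Set.univ := fun y =>
    ⟨(hsurj y).choose, trivial, (hsurj y).choose_spec⟩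
  -- Y is an interval
  have hInt : ∀ u, u ∈ Y → ∀ v, v ∈ Y → ∀ w : ℤ, u ≤ w → w ≤ v → w ∈ Y := by
    intro u hu v hv w h1 h2
    obtain ⟨t, _, ht⟩ := interval_lemma Y (f '' Set.univ) ⟨u,hu⟩ ⟨v,hv⟩
      (hYconn _ (hmemY _) _ (hmemY _)) (hmemY _) w h1 h2
    exact ht ▸ t.2
  -- find three consecutive values in Y
  obtain ⟨z, hz0, hz1, hz2⟩ : ∃ z : ℤ, z ∈ Y ∧ z+1 ∈ Y ∧ z+2 ∈ Y := by
    set y0 := f (0 : ZMod m) with hy0def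
    have hy0 : (y0 : ℤ) ∈ Y := y0.2
    have hex1 : ∃ y1 ∈ Y, y1 ≠ (y0 : ℤ) := by
      by_contra h; push_neg at h
      exact hns (y0 : ℤ) (Set.eq_singleton_iff_unique_mem.mpr ⟨hy0, h⟩)
    obtain ⟨y1, hy1, hne⟩ := hex1
    obtain ⟨u, v, hu, hv, huv⟩ : ∃ u v : ℤ, u ∈ Y ∧ v ∈ Y ∧ u < v := by
      rcases lt_or_gt_of_ne hne with h | h
      · exact ⟨y1, y0, hy1, hy0, h⟩
      · exact ⟨y0, y1, hy0, hy1, h⟩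
    by_cases hb2 : u + 1 < v
    · exact ⟨u, hu, hInt u hu v hv (u+1) (by omega) (by omega),
        hInt u hu v hv (u+2) (by omega) (by omega)⟩
    · have hv1 : v = u + 1 := by omega
      have hex2 : ∃ y2 ∈ Y, y2 ≠ u ∧ y2 ≠ u + 1 := by
        by_contra h; push_neg at h
        apply hnd u
        ext w
        constructor
        · intro hw
          rcases Classical.em (w = u) with h0 | h0
          · exact Or.inl h0
          · exact Or.inr (h w hw h0)
        · rintro (rfl | rfl)
          · exact hu
          · exact hv1 ▸ hv
      obtain ⟨y2, hy2, hne1, hne2⟩ := hex2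
      rcases lt_or_gt_of_ne hne1 with h | h
      · refine ⟨u-1, hInt y2 hy2 v hv (u-1) (by omega) (by omega), ?_, ?_⟩
        · have : u - 1 + 1 = u := by ring
          rw [this]; exact hu
        · have : u - 1 + 2 = v := by omega
          rw [this]; exact hv
      · exact ⟨u, hu, hv1 ▸ hv, hInt v hv y2 hy2 (u+2) (by omega) (by omega)⟩
  -- main contradiction via the middle value z+1
  set y1 : Y := ⟨z+1, hz1⟩ with hy1def
  have hAconn := hpt y1
  have hAc := compl_conn hm _ hAconn
  have himg := hcont _ hAc
  obtain ⟨xa, hxa⟩ := hsurj ⟨z, hz0⟩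
  obtain ⟨xc, hxc⟩ := hsurj ⟨z+2, hz2⟩
  have hxaC : xa ∈ (f ⁻¹' {y1})ᶜ := by
    intro hmem
    have : f xa = y1 := hmem
    rw [hxa] at this
    have h2 : (z : ℤ) = z + 1 := congrArg Subtype.val this
    omega
  have hxcC : xc ∈ (f ⁻¹' {y1})ᶜ := by
    intro hmem
    have : f xc = y1 := hmem
    rw [hxc] at this
    have h2 : (z + 2 : ℤ) = z + 1 := congrArg Subtype.val this
    omega
  have hya : (⟨z, hz0⟩ : Y) ∈ f '' (f ⁻¹' {y1})ᶜ := ⟨xa, hxaC, hxa⟩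
  have hyc : (⟨z+2, hz2⟩ : Y) ∈ f '' (f ⁻¹' {y1})ᶜ := ⟨xc, hxcC, hxc⟩
  obtain ⟨t, htT, htv⟩ := interval_lemma Y (f '' (f ⁻¹' {y1})ᶜ) ⟨z, hz0⟩ ⟨z+2, hz2⟩
    (himg _ hya _ hyc) hya (z+1) (by show z ≤ z+1; omega) (by show z+1 ≤ z+2; omega)
  obtain ⟨x, hxC, hfx⟩ := htT
  exact hxC (show f x ∈ ({y1} : Set Y) from hfx.trans (Subtype.ext htv))
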